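/- Let H be a Heisenberg group (a group whose commutator subgroup [H,H] is contained in its centre Z(H)) such that the centre Z(H) has finite index in H. Let A be a maximal abelian subgroup of H (so Z(H) ⊆ A) and let χ' : A → ℂˣ be a homomorphism such that ker(χ'|_{Z(H)}) ∩ [H,H] = {1}. Then the induced representation Ind_A^H χ', namely the space of functions f : H → ℂ satisfying f(ah) = χ'(a)·f(h) for all a ∈ A and h ∈ H, with H acting by right translation (h·f)(g) = f(gh), is a nonzero irreducible representation of H. -/

import Mathlib

/-- A subgroup is maximal abelian: it is abelian, and any abelian subgroup
containing it is equal to it. -/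
def Subgroup.IsMaximalAbelian {H : Type*} [Group H] (A : Subgroup H) : Prop :=
  (∀ x ∈ A, ∀ y ∈ A, x * y = y * x) ∧
    ∀ B : Subgroup H, A ≤ B → (∀ x ∈ B, ∀ y ∈ B, x * y = y * x) → B = A

/-- The space of the induced representation `Ind_A^H χ'`: functions `f : H → ℂ`
with `f (a * h) = χ' a * f h` for `a ∈ A`, as a subspace of `H → ℂ`. -/
noncomputable def inducedSpace {H : Type*} [Group H] (A : Subgroup H) (χ' : A →* ℂˣ) :
    Submodule ℂ (H → ℂ) where
  carrier := {f | ∀ (a : A) (h : H), f ((a : H) * h) = (χ' a : ℂ) * f h}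
  add_mem' := by
    intro f g hf hg a h
    simp only [Pi.add_apply, hf a h, hg a h, mul_add]
  zero_mem' := by
    intro a h
    simp
  smul_mem' := by
    intro c f hf a h
    simp only [Pi.smul_apply, hf a h, smul_eq_mul]
    ring

open scoped commutatorElement

lemma mem_inducedSpace_iff {H : Type*} [Group H] {A : Subgroup H} {χ' : A →* ℂˣ}
    {f : H → ℂ} :
    f ∈ inducedSpace A χ' ↔ ∀ (a : A) (h : H), f ((a : H) * h) = (χ' a : ℂ) * f h :=
  Iff.rfl

/-- A maximal abelian subgroup contains every element commuting with all of it. -/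
lemma maxAbelian_mem {H : Type*} [Group H] {A : Subgroup H}
    (hA : A.IsMaximalAbelian) {k : H} (hk : ∀ a ∈ A, k * a = a * k) : k ∈ A := by
  set S : Set H := insert k ↑A with hS
  have hSC : S ⊆ Subgroup.centralizer S := by
    intro x hx
    rw [SetLike.mem_coe, Subgroup.mem_centralizer_iff]
    intro y hy
    rcases hx with rfl | hx <;> rcases hy with rfl | hy
    · rfl
    · exact (hk y hy).symm
    · exact hk x hx
    · exact hA.1 y hy x hx
  have hB : ∀ x ∈ Subgroup.closure S, ∀ y ∈ Subgroup.closure S, x * y = y * x := by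
    intro x hx y hy
    have hyC : ∀ s ∈ S, s * y = y * s := by
      have hyc := (Subgroup.closure_le (Subgroup.centralizer S)).mpr hSC hy
      exact Subgroup.mem_centralizer_iff.mp hyc
    induction hx using Subgroup.closure_induction with
    | mem s hs => exact hyC s hs
    | one => simp
    | mul a b ha hb iha ihb => rw [mul_assoc, ihb, ← mul_assoc, iha, mul_assoc]
    | inv a ha iha => exact Commute.inv_left iha
  have hAB : A ≤ Subgroup.closure S :=
    fun a ha => Subgroup.subset_closure (Set.mem_insert_of_mem _ ha)
  have heq := hA.2 (Subgroup.closure S) hAB hB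
  exact heq ▸ Subgroup.subset_closure (Set.mem_insert k ↑A)

/-- The induced representation of a suitable character of a maximal abelian subgroup
of a Heisenberg group with finite central quotient is nonzero and irreducible
(under the right-translation action of `H`). -/
theorem induced_rep_irreducible
    (H : Type*) [Group H]
    (hHeis : commutator H ≤ Subgroup.center H)
    (hfin : (Subgroup.center H).FiniteIndex)
    (A : Subgroup H) (hA : A.IsMaximalAbelian)
    (χ' : A →* ℂˣ)
    (hker : ∀ h ∈ commutator H, h ∈ Subgroup.center H →
      ∀ hA' : h ∈ A, χ' ⟨h, hA'⟩ = 1 → h = 1) :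
    inducedSpace A χ' ≠ ⊥ ∧
    ∀ W : Submodule ℂ (H → ℂ), W ≤ inducedSpace A χ' →
      (∀ f ∈ W, ∀ h : H, (fun g => f (g * h)) ∈ W) →
      W = ⊥ ∨ W = inducedSpace A χ' := by
  classical
  -- The centre is contained in A, hence A has finite index.
  have hZA : Subgroup.center H ≤ A := fun z hz =>
    maxAbelian_mem hA (fun a _ => (Subgroup.mem_center_iff.mp hz a).symm)
  -- A is normal: conjugates of elements of A stay in A.
  have hnorm : ∀ (g a : H), a ∈ A → g * a * g⁻¹ ∈ A := by
    intro g a ha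
    have hc : ⁅g, a⁆ ∈ A :=
      hZA (hHeis (Subgroup.commutator_mem_commutator (Subgroup.mem_top g) (Subgroup.mem_top a)))
    have hrw : g * a * g⁻¹ = ⁅g, a⁆ * a := by group
    rw [hrw]; exact mul_mem hc ha
  haveI : A.FiniteIndex := Subgroup.finiteIndex_of_le hZA
  haveI : Fintype (H ⧸ A) := Fintype.ofFinite _
  -- the basic equivariant "delta" function supported on A
  set e₁ : H → ℂ := fun g => if hg : g ∈ A then (χ' ⟨g, hg⟩ : ℂ) else 0 with he₁
  have he₁V : e₁ ∈ inducedSpace A χ' := by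
    rw [mem_inducedSpace_iff]
    intro a g
    by_cases hg : g ∈ A
    · have hag : (a : H) * g ∈ A := mul_mem a.2 hg
      simp only [e₁]
      rw [dif_pos hag, dif_pos hg]
      have hsub : (⟨(a : H) * g, hag⟩ : A) = a * ⟨g, hg⟩ := rfl
      rw [hsub, map_mul]
      push_cast
      ring
    · have hag : (a : H) * g ∉ A := by
        intro hmem
        exact hg (by simpa using mul_mem (inv_mem a.2) hmem)
      simp only [e₁]
      rw [dif_neg hag, dif_neg hg, mul_zero]
  -- eigenvalues of the right A-translation operators, and their separation
  obtain ⟨lam, heig, hsep⟩ :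
      ∃ lam : H ⧸ A → A → ℂ,
        (∀ f ∈ inducedSpace A χ', ∀ (g : H) (a : A), f (g * (a : H)) = lam (↑g) a * f g) ∧
        (∀ q q' : H ⧸ A, q ≠ q' → ∃ a : A, lam q a ≠ lam q' a) := by
    refine ⟨fun q a => (χ' ⟨q.out * a * q.out⁻¹, hnorm q.out a a.2⟩ : ℂ), ?_, ?_⟩
    · -- the eigenvalue property
      intro f hf g a
      obtain ⟨b, hb⟩ := QuotientGroup.mk_out_eq_mul A g
      have hmem : g * a * g⁻¹ ∈ A := hnorm g a a.2
      have hout : (QuotientGroup.mk g : H ⧸ A).out * (a : H) * ((QuotientGroup.mk g : H ⧸ A).out)⁻¹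
          = g * a * g⁻¹ := by
        rw [hb]
        have hba : (b : H) * a = (a : H) * b := hA.1 b b.2 a a.2
        calc (g * b) * a * (g * b)⁻¹ = g * ((b : H) * a * (b : H)⁻¹) * g⁻¹ := by group
          _ = g * ((a : H) * b * (b : H)⁻¹) * g⁻¹ := by rw [hba]
          _ = g * a * g⁻¹ := by group
      have hlam : (χ' ⟨(QuotientGroup.mk g : H ⧸ A).out * a * ((QuotientGroup.mk g : H ⧸ A).out)⁻¹,
            hnorm _ a a.2⟩ : ℂ) = (χ' ⟨g * a * g⁻¹, hmem⟩ : ℂ) := by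
        congr 1
        exact congrArg χ' (Subtype.ext hout)
      show f (g * a) = (χ' ⟨(QuotientGroup.mk g : H ⧸ A).out * a * ((QuotientGroup.mk g : H ⧸ A).out)⁻¹,
            hnorm _ a a.2⟩ : ℂ) * f g
      rw [hlam]
      have harg : g * (a : H) = (g * a * g⁻¹) * g := by group
      conv_lhs => rw [harg]
      exact hf ⟨g * a * g⁻¹, hmem⟩ g
    · -- separation of eigenvalue characters
      intro q q' hne
      by_contra hcon
      push_neg at hcon
      apply hne
      set h := q.out with hh
      set h' := q'.out with hh'
      have hk : ∀ a ∈ A, (h'⁻¹ * h) * a = a * (h'⁻¹ * h) := by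
        intro a ha
        have hcomm : ⁅h'⁻¹ * h, a⁆ ∈ commutator H :=
          Subgroup.commutator_mem_commutator (Subgroup.mem_top _) (Subgroup.mem_top _)
        have hcenter : ⁅h'⁻¹ * h, a⁆ ∈ Subgroup.center H := hHeis hcomm
        have hcA : ⁅h'⁻¹ * h, a⁆ ∈ A := hZA hcenter
        have heq := hcon ⟨a, ha⟩
        have hu : χ' ⟨h * a * h⁻¹, hnorm h a ha⟩ = χ' ⟨h' * a * h'⁻¹, hnorm h' a ha⟩ :=
          Units.ext (by exact_mod_cast heq)
        have hc' : (h * a * h⁻¹) * (h' * a * h'⁻¹)⁻¹ = h' * ⁅h'⁻¹ * h, a⁆ * h'⁻¹ := by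
          simp only [commutatorElement_def]; group
        have hcent : h' * ⁅h'⁻¹ * h, a⁆ * h'⁻¹ = ⁅h'⁻¹ * h, a⁆ := by
          rw [Subgroup.mem_center_iff.mp hcenter h', mul_assoc, mul_inv_cancel, mul_one]
        have hxy : (⟨h * a * h⁻¹, hnorm h a ha⟩ : A) * (⟨h' * a * h'⁻¹, hnorm h' a ha⟩ : A)⁻¹
            = ⟨⁅h'⁻¹ * h, a⁆, hcA⟩ := by
          ext
          simp only [Subgroup.coe_mul, InvMemClass.coe_inv]
          rw [hc', hcent]
        have h1 : χ' ⟨⁅h'⁻¹ * h, a⁆, hcA⟩ = 1 := by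
          rw [← hxy, map_mul, map_inv, hu, mul_inv_cancel]
        have := hker _ hcomm hcenter hcA h1
        exact commutatorElement_eq_one_iff_mul_comm.mp this
      have hkA : h'⁻¹ * h ∈ A := maxAbelian_mem hA hk
      rw [← QuotientGroup.out_eq' q, ← QuotientGroup.out_eq' q']
      exact (QuotientGroup.eq.mpr hkA).symm
  refine ⟨?_, ?_⟩
  · -- nonzero
    intro hbot
    rw [hbot, Submodule.mem_bot] at he₁V
    have h1 : e₁ 1 = 1 := by
      simp only [e₁]
      rw [dif_pos A.one_mem]
      have : (⟨(1 : H), A.one_mem⟩ : A) = 1 := rfl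
      rw [this, map_one, Units.val_one]
    rw [he₁V] at h1
    simp at h1
  -- irreducibility
  intro W hWV hWinv
  rcases eq_or_ne W ⊥ with hbot | hWne
  · exact Or.inl hbot
  right
  -- restriction to a single coset stays in W
  have key : ∀ s : Finset (H ⧸ A), ∀ f ∈ W, (∀ g : H, (↑g : H ⧸ A) ∉ s → f g = 0) →
      ∀ q : H ⧸ A, (fun g : H => if (↑g : H ⧸ A) = q then f g else 0) ∈ W := by
    intro s
    induction s using Finset.strongInduction with
    | _ s ih =>
      intro f hfW hsupp q
      by_cases hex : ∃ q' ∈ s, q' ≠ q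
      · obtain ⟨q', hq's, hq'ne⟩ := hex
        obtain ⟨a, ha⟩ := hsep q q' hq'ne.symm
        set f' : H → ℂ := (fun g => f (g * a)) - lam q' a • f with hf'
        have hf'W : f' ∈ W := W.sub_mem (hWinv f hfW a) (W.smul_mem _ hfW)
        have hfV : f ∈ inducedSpace A χ' := hWV hfW
        have hf'supp : ∀ g : H, (↑g : H ⧸ A) ∉ s.erase q' → f' g = 0 := by
          intro g hg
          by_cases hgs : (↑g : H ⧸ A) ∈ s
          · have hgq' : (↑g : H ⧸ A) = q' := by
              by_contra hcon2; exact hg (Finset.mem_erase.mpr ⟨hcon2, hgs⟩)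
            simp only [hf', Pi.sub_apply, Pi.smul_apply, smul_eq_mul]
            rw [heig f hfV g a, hgq']; ring
          · simp only [hf', Pi.sub_apply, Pi.smul_apply, smul_eq_mul]
            rw [heig f hfV g a, hsupp g hgs]; ring
        have hrq := ih (s.erase q') (Finset.erase_ssubset hq's) f' hf'W hf'supp q
        have he : (fun g : H => if (↑g : H ⧸ A) = q then f g else 0)
            = (lam q a - lam q' a)⁻¹ • (fun g : H => if (↑g : H ⧸ A) = q then f' g else 0) := by
          funext g
          by_cases hgq : (↑g : H ⧸ A) = q
          · simp only [Pi.smul_apply, smul_eq_mul, if_pos hgq]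
            have hf'g : f' g = (lam q a - lam q' a) * f g := by
              simp only [hf', Pi.sub_apply, Pi.smul_apply, smul_eq_mul]
              rw [heig f hfV g a, hgq]; ring
            rw [hf'g, ← mul_assoc, inv_mul_cancel₀ (sub_ne_zero.mpr ha), one_mul]
          · simp only [Pi.smul_apply, smul_eq_mul, if_neg hgq, mul_zero]
        rw [he]
        exact W.smul_mem _ hrq
      · push_neg at hex
        have heq : (fun g : H => if (↑g : H ⧸ A) = q then f g else 0) = f := by
          funext g
          by_cases hgq : (↑g : H ⧸ A) = q
          · rw [if_pos hgq]
          · rw [if_neg hgq, hsupp g (fun hgs => hgq (hex _ hgs))]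
        rw [heq]; exact hfW
  obtain ⟨f, hfW, hf0⟩ := (Submodule.ne_bot_iff W).mp hWne
  obtain ⟨g₀, hg₀⟩ : ∃ g, f g ≠ 0 := by
    by_contra hc; push_neg at hc; exact hf0 (funext hc)
  have hrq : (fun g : H => if (↑g : H ⧸ A) = (↑g₀ : H ⧸ A) then f g else 0) ∈ W :=
    key Finset.univ f hfW (fun g hg => absurd (Finset.mem_univ _) hg) _
  set F : H → ℂ := fun g =>
      if (↑(g * g₀) : H ⧸ A) = (↑g₀ : H ⧸ A) then f (g * g₀) else 0 with hF
  have hFW : F ∈ W := hWinv _ hrq g₀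
  have he₁W : e₁ ∈ W := by
    have hfV : f ∈ inducedSpace A χ' := hWV hfW
    have he : e₁ = (f g₀)⁻¹ • F := by
      funext g
      by_cases hg : g ∈ A
      · have hq : (↑(g * g₀) : H ⧸ A) = (↑g₀ : H ⧸ A) := by
          apply QuotientGroup.eq.mpr
          have hmem := hnorm g₀⁻¹ g⁻¹ (inv_mem hg)
          simpa [mul_assoc, mul_inv_rev] using hmem
        simp only [e₁, hF, Pi.smul_apply, smul_eq_mul]
        rw [dif_pos hg, if_pos hq]
        have hval : f (g * g₀) = (χ' ⟨g, hg⟩ : ℂ) * f g₀ := hfV ⟨g, hg⟩ g₀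
        rw [hval, mul_comm ((χ' ⟨g, hg⟩ : ℂ)) (f g₀), ← mul_assoc,
          inv_mul_cancel₀ hg₀, one_mul]
      · have hq : (↑(g * g₀) : H ⧸ A) ≠ (↑g₀ : H ⧸ A) := by
          intro hcon
          have hmem := QuotientGroup.eq.mp hcon
          apply hg
          have h2 : g₀ * ((g * g₀)⁻¹ * g₀) * g₀⁻¹ ∈ A := hnorm g₀ _ hmem
          have h3 : g⁻¹ ∈ A := by
            have : g₀ * ((g * g₀)⁻¹ * g₀) * g₀⁻¹ = g⁻¹ := by group
            rwa [this] at h2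
          simpa using inv_mem h3
        simp only [e₁, hF, Pi.smul_apply, smul_eq_mul]
        rw [dif_neg hg, if_neg hq, mul_zero]
    rw [he]; exact W.smul_mem _ hFW
  apply le_antisymm hWV
  intro φ hφ
  have hdecomp : φ = ∑ q : H ⧸ A, φ q.out • (fun g => e₁ (g * q.out⁻¹)) := by
    funext g
    rw [Finset.sum_apply]
    have hterm : ∀ q : H ⧸ A,
        (φ q.out • fun g : H => e₁ (g * q.out⁻¹)) g = if q = (↑g : H ⧸ A) then φ g else 0 := by
      intro q
      simp only [Pi.smul_apply, smul_eq_mul]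
      by_cases hq : q = (↑g : H ⧸ A)
      · rw [if_pos hq]
        have hmem : g * q.out⁻¹ ∈ A := by
          obtain ⟨b, hb⟩ := QuotientGroup.mk_out_eq_mul A g
          rw [hq, hb]
          have hmem' := hnorm g ((b : H))⁻¹ (inv_mem b.2)
          simpa [mul_inv_rev, mul_assoc] using hmem'
        simp only [e₁]
        rw [dif_pos hmem]
        have hval := hφ ⟨g * q.out⁻¹, hmem⟩ q.out
        have harg : (g * q.out⁻¹) * q.out = g := by group
        rw [harg] at hval
        rw [hval]; ring
      · rw [if_neg hq]
        have hnmem : g * q.out⁻¹ ∉ A := by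
          intro hmem
          apply hq
          have h2 : q.out⁻¹ * (g * q.out⁻¹) * (q.out⁻¹)⁻¹ ∈ A := hnorm _ _ hmem
          have h3 : q.out⁻¹ * g ∈ A := by
            have : q.out⁻¹ * (g * q.out⁻¹) * (q.out⁻¹)⁻¹ = q.out⁻¹ * g := by group
            rwa [this] at h2
          rw [← QuotientGroup.out_eq' q]
          exact QuotientGroup.eq.mpr h3
        simp only [e₁]
        rw [dif_neg hnmem, mul_zero]
    rw [Finset.sum_congr rfl (fun q _ => hterm q)]
    simp
  rw [hdecomp]
  exact Submodule.sum_mem _ (fun q _ => Submodule.smul_mem _ _ (hWinv e₁ he₁W q.out⁻¹))
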